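/- Projection lemma: let Δ = Δ(P;μ) be a Minkowski complex for convex sets P_1,...,P_n ⊆ R^d containing 0, and suppose there is a line ℓ through μ that does not intersect P_σ for any σ ∈ Δ. Let π: R^d → R^{d-1} be the orthogonal projection along ℓ. Then Δ = Δ(π(P); π(μ)), i.e., for all σ ⊆ [n]: μ ∉ P_σ if and only if π(μ) ∉ π(P_σ). In particular, the convex threshold dimension of Δ is less than d. -/

import Mathlib

open scoped Pointwise

/-- A simplicial complex `Δ` on a finite vertex set `α` is realizable as a
Minkowski complex in dimension `d` if there are convex bodies (compact convex
sets) `P i ⊆ ℝ^d` containing `0` and a point `μ` with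
`Δ = Δ(P;μ) = {σ : μ ∉ ∑_{i∈σ} P i}`. -/
def MinkowskiRealizable {α : Type*} [Fintype α] (d : ℕ) (Δ : Set (Finset α)) : Prop :=
  ∃ (P : α → Set (Fin d → ℝ)) (μ : Fin d → ℝ),
    (∀ i, Convex ℝ (P i)) ∧ (∀ i, IsCompact (P i)) ∧ (∀ i, (0 : Fin d → ℝ) ∈ P i) ∧
    ∀ σ : Finset α, σ ∈ Δ ↔ μ ∉ ∑ i ∈ σ, P i

/-- The convex threshold dimension: the smallest dimension in which `Δ` is a
Minkowski complex. -/
noncomputable def ctd {α : Type*} [Fintype α] (Δ : Set (Finset α)) : ℕ :=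
  sInf {d | MinkowskiRealizable d Δ}

/-- Linear maps commute with finite Minkowski sums of sets. -/
lemma image_finset_sum_sets {α E F : Type*} [AddCommMonoid E] [AddCommMonoid F]
    (f : E →+ F) (σ : Finset α) (P : α → Set E) :
    f '' (∑ i ∈ σ, P i) = ∑ i ∈ σ, f '' (P i) := by
  classical
  induction σ using Finset.induction_on with
  | empty => simp [Set.singleton_zero]
  | insert _ _ h ih =>
      rw [Finset.sum_insert h, Finset.sum_insert h, Set.image_add, ih]

/-- projection lemma.  If the line ℓ = μ + ℝ·v misses P_σ for
every face σ of Δ = Δ(P;μ), and π is the orthogonal projection along ℓ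
(a linear map to ℝ^{d-1} whose fiber over π(μ) is exactly ℓ), then
μ ∉ P_σ ↔ π(μ) ∉ π(P_σ) for all σ, so Δ = Δ(π(P); π(μ)); in particular
ctd(Δ) < d. -/
theorem projection_lemma (n d : ℕ) (P : Fin n → Set (Fin d → ℝ))
    (hconv : ∀ i, Convex ℝ (P i)) (hcpt : ∀ i, IsCompact (P i))
    (h0 : ∀ i, (0 : Fin d → ℝ) ∈ P i) (μ : Fin d → ℝ)
    (v : Fin d → ℝ) (hv : v ≠ 0)
    (hline : ∀ σ : Finset (Fin n), μ ∉ ∑ i ∈ σ, P i →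
      ∀ t : ℝ, μ + t • v ∉ ∑ i ∈ σ, P i)
    (π : (Fin d → ℝ) →ₗ[ℝ] (Fin (d - 1) → ℝ))
    (hπ : ∀ x : Fin d → ℝ, π x = π μ ↔ ∃ t : ℝ, x = μ + t • v) :
    (∀ σ : Finset (Fin n), μ ∉ ∑ i ∈ σ, P i ↔ π μ ∉ π '' (∑ i ∈ σ, P i)) ∧
    ctd {σ : Finset (Fin n) | μ ∉ ∑ i ∈ σ, P i} < d := by
  have key : ∀ σ : Finset (Fin n), μ ∉ ∑ i ∈ σ, P i ↔ π μ ∉ π '' (∑ i ∈ σ, P i) := by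
    intro σ
    constructor
    · intro h hmem
      obtain ⟨x, hx, hxe⟩ := hmem
      obtain ⟨t, rfl⟩ := (hπ x).1 hxe
      exact hline σ h t hx
    · intro h hmem
      exact h ⟨μ, hmem, rfl⟩
  refine ⟨key, ?_⟩
  have hd : 0 < d := by
    by_contra hd
    push_neg at hd
    interval_cases d
    exact hv (Subsingleton.elim _ _)
  have hreal : MinkowskiRealizable (d - 1) {σ : Finset (Fin n) | μ ∉ ∑ i ∈ σ, P i} := by
    refine ⟨fun i => π '' P i, π μ, ?_, ?_, ?_, ?_⟩
    · exact fun i => (hconv i).linear_image π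
    · exact fun i => (hcpt i).image π.continuous_of_finiteDimensional
    · exact fun i => ⟨0, h0 i, map_zero π⟩
    · intro σ
      have h := image_finset_sum_sets π.toAddMonoidHom σ P
      rw [show (⇑π.toAddMonoidHom : (Fin d → ℝ) → (Fin (d-1) → ℝ)) = ⇑π from rfl] at h
      rw [← h]
      exact key σ
  calc ctd {σ : Finset (Fin n) | μ ∉ ∑ i ∈ σ, P i} ≤ d - 1 := Nat.sInf_le hreal
    _ < d := Nat.sub_lt hd one_pos
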